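/- For K > 1 and any s ∈ ℝ^K, the gradient of the function s ↦ H(softmax s) vanishes at s if and only if softmax s equals the uniform distribution u_K, i.e., (softmax s)_k = 1/K for every k. -/

import Mathlib

open Real BigOperators

/-- The softmax map on `ℝ^K`. -/
noncomputable def softmax {K : ℕ} (s : EuclideanSpace ℝ (Fin K)) : EuclideanSpace ℝ (Fin K) :=
  (WithLp.equiv 2 (Fin K → ℝ)).symm fun k => Real.exp (s k) / ∑ j, Real.exp (s j)

/-- Cross-entropy `H(p, q) = -∑ k, p k * log (q k)`. -/
noncomputable def crossEntropy {K : ℕ} (p q : EuclideanSpace ℝ (Fin K)) : ℝ :=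
  -∑ k, p k * Real.log (q k)

/-- Entropy `H(p) = -∑ k, p k * log (p k)`. -/
noncomputable def entropy {K : ℕ} (p : EuclideanSpace ℝ (Fin K)) : ℝ :=
  -∑ k, p k * Real.log (p k)

/-- A probability vector: nonnegative components summing to 1. -/
def IsProbVec {K : ℕ} (p : EuclideanSpace ℝ (Fin K)) : Prop :=
  (∀ k, 0 ≤ p k) ∧ ∑ k, p k = 1

/-- The uniform distribution `u_K`, with every component `1/K`. -/
noncomputable def uniformDist (K : ℕ) : EuclideanSpace ℝ (Fin K) :=
  (WithLp.equiv 2 (Fin K → ℝ)).symm fun _ => 1 / (K : ℝ)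

section aux
variable {K : ℕ}

lemma sumexp_pos (hK : 0 < K) (s : EuclideanSpace ℝ (Fin K)) :
    0 < ∑ j, Real.exp (s j) :=
  Finset.sum_pos (fun j _ => Real.exp_pos _) ⟨⟨0, hK⟩, Finset.mem_univ _⟩

lemma entropy_softmax_eq (hK : 0 < K) :
    (fun t : EuclideanSpace ℝ (Fin K) => entropy (softmax t)) =
      fun t => Real.log (∑ j, Real.exp (t j)) -
        (∑ j, Real.exp (t j) * t j) * (∑ j, Real.exp (t j))⁻¹ := by
  funext t
  have hA : (0:ℝ) < ∑ j, Real.exp (t j) := sumexp_pos hK t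
  have hsm : ∀ k, softmax t k = Real.exp (t k) / ∑ j, Real.exp (t j) := fun k => rfl
  simp only [entropy, hsm]
  have hlog : ∀ k : Fin K, Real.log (Real.exp (t k) / ∑ j, Real.exp (t j)) =
      t k - Real.log (∑ j, Real.exp (t j)) := by
    intro k
    rw [Real.log_div (Real.exp_ne_zero _) hA.ne', Real.log_exp]
  rw [Finset.sum_congr rfl (fun k _ => by rw [hlog k])]
  have : ∀ k : Fin K, Real.exp (t k) / (∑ j, Real.exp (t j)) *
      (t k - Real.log (∑ j, Real.exp (t j)))
      = (Real.exp (t k) * t k) * (∑ j, Real.exp (t j))⁻¹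
        - Real.log (∑ j, Real.exp (t j)) * (Real.exp (t k) * (∑ j, Real.exp (t j))⁻¹) := by
    intro k; field_simp
  rw [Finset.sum_congr rfl (fun k _ => this k), Finset.sum_sub_distrib]
  rw [← Finset.sum_mul, ← Finset.mul_sum, ← Finset.sum_mul]
  have hs : (∑ k, Real.exp (t k)) * (∑ j, Real.exp (t j))⁻¹ = 1 := by
    field_simp
  rw [hs, mul_one]
  ring

end aux

section grad

set_option maxHeartbeats 1000000 in
lemma hasGradientAt_entropy_softmax (hK : 0 < K) (s : EuclideanSpace ℝ (Fin K)) :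
    HasGradientAt (fun t => entropy (softmax t))
      ((WithLp.equiv 2 (Fin K → ℝ)).symm fun k =>
        softmax s k * ((∑ j, Real.exp (s j) * s j) * (∑ j, Real.exp (s j))⁻¹ - s k)) s := by
  have hA : (0:ℝ) < ∑ j, Real.exp (s j) := sumexp_pos hK s
  have hproj : ∀ j : Fin K, HasFDerivAt (fun t : EuclideanSpace ℝ (Fin K) => t j)
      (EuclideanSpace.proj j : EuclideanSpace ℝ (Fin K) →L[ℝ] ℝ) s := by
    intro j
    have hco : ⇑(EuclideanSpace.proj j : EuclideanSpace ℝ (Fin K) →L[ℝ] ℝ)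
        = fun t : EuclideanSpace ℝ (Fin K) => t j := funext fun t => rfl
    rw [← hco]
    exact ContinuousLinearMap.hasFDerivAt (EuclideanSpace.proj j : EuclideanSpace ℝ (Fin K) →L[ℝ] ℝ)
  have hA' : HasFDerivAt (fun t : EuclideanSpace ℝ (Fin K) => ∑ j, Real.exp (t j))
      (∑ j, Real.exp (s j) • (EuclideanSpace.proj j : EuclideanSpace ℝ (Fin K) →L[ℝ] ℝ)) s :=
    HasFDerivAt.fun_sum fun j _ => (hproj j).exp
  have hB' : HasFDerivAt (fun t : EuclideanSpace ℝ (Fin K) => ∑ j, Real.exp (t j) * t j)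
      (∑ j, (Real.exp (s j) • ((EuclideanSpace.proj j : EuclideanSpace ℝ (Fin K) →L[ℝ] ℝ))
        + s j • (Real.exp (s j) • (EuclideanSpace.proj j : EuclideanSpace ℝ (Fin K) →L[ℝ] ℝ)))) s :=
    HasFDerivAt.fun_sum fun j _ => ((hproj j).exp.fun_mul (hproj j))
  have hinv : HasFDerivAt (fun t : EuclideanSpace ℝ (Fin K) => (∑ j, Real.exp (t j))⁻¹)
      ((-(((∑ j, Real.exp (s j)) ^ 2)⁻¹)) •
        (∑ j, Real.exp (s j) • (EuclideanSpace.proj j : EuclideanSpace ℝ (Fin K) →L[ℝ] ℝ))) s :=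
    (hasDerivAt_inv hA.ne').comp_hasFDerivAt s hA'
  have hmul := hB'.fun_mul hinv
  have hlog := hA'.log hA.ne'
  have htot := hlog.fun_sub hmul
  rw [entropy_softmax_eq hK, hasGradientAt_iff_hasFDerivAt]
  refine htot.congr_fderiv ?_
  symm
  apply ContinuousLinearMap.ext
  intro x
  rw [InnerProductSpace.toDual_apply_apply]
  simp only [ContinuousLinearMap.sub_apply, ContinuousLinearMap.add_apply,
    ContinuousLinearMap.smul_apply, ContinuousLinearMap.coe_sum', Finset.sum_apply,
    PiLp.proj_apply, smul_eq_mul, PiLp.inner_apply, RCLike.inner_apply, conj_trivial,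
    WithLp.equiv_symm_apply, PiLp.toLp_apply]
  simp only [Finset.mul_sum]
  rw [← Finset.sum_add_distrib, ← Finset.sum_sub_distrib]
  apply Finset.sum_congr rfl
  intro k _
  have hsm : softmax s k = Real.exp (s k) / ∑ j, Real.exp (s j) := rfl
  rw [hsm]
  field_simp
  ring
end grad

/-- For `K > 1` and any `s ∈ ℝ^K`, the gradient of `s ↦ H(softmax s)` vanishes at
`s` iff `softmax s` is the uniform distribution, i.e. `(softmax s)_k = 1/K` for every `k`. -/
theorem entropy_softmax_gradient_eq_zero_iff (K : ℕ) (hK : 1 < K)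
    (s : EuclideanSpace ℝ (Fin K)) :
    gradient (fun s => entropy (softmax s)) s = 0 ↔
      ∀ k : Fin K, softmax s k = 1 / (K : ℝ) := by
  have hK0 : 0 < K := lt_trans zero_lt_one hK
  have hA : (0:ℝ) < ∑ j, Real.exp (s j) := sumexp_pos hK0 s
  have hg := hasGradientAt_entropy_softmax hK0 s
  rw [hg.gradient]
  set m : ℝ := (∑ j, Real.exp (s j) * s j) * (∑ j, Real.exp (s j))⁻¹ with hm
  have hsm : ∀ k, softmax s k = Real.exp (s k) / ∑ j, Real.exp (s j) := fun _ => rfl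
  have hsmpos : ∀ k, 0 < softmax s k := fun k => by
    rw [hsm k]; exact div_pos (Real.exp_pos _) hA
  have hveq : ((WithLp.equiv 2 (Fin K → ℝ)).symm fun k => softmax s k * (m - s k)) = 0 ↔
      ∀ k, softmax s k * (m - s k) = 0 := by
    constructor
    · intro h k
      have h2 : ((WithLp.equiv 2 (Fin K → ℝ)).symm fun k => softmax s k * (m - s k)) k
          = (0 : EuclideanSpace ℝ (Fin K)) k := by rw [h]
      simpa [WithLp.equiv_symm_apply] using h2
    · intro h
      apply PiLp.ext
      intro k
      simpa [WithLp.equiv_symm_apply] using h k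
  rw [hveq]
  constructor
  · intro h k
    have hsk : ∀ j, s j = m := by
      intro j
      have := h j
      rcases mul_eq_zero.mp this with h1 | h1
      · exact absurd h1 (hsmpos j).ne'
      · linarith [sub_eq_zero.mp h1]
    have hexp : ∀ j : Fin K, Real.exp (s j) = Real.exp m := fun j => by rw [hsk j]
    have hAsum : (∑ j, Real.exp (s j)) = K * Real.exp m := by
      rw [Finset.sum_congr rfl fun j _ => hexp j]
      simp [Finset.card_univ, mul_comm]
    rw [hsm k, hsk k, hAsum]
    rw [div_eq_div_iff (by positivity) (by positivity)]
    ring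
  · intro h k
    have hexp : ∀ j : Fin K, Real.exp (s j) = (∑ i, Real.exp (s i)) / K := by
      intro j
      have := h j
      rw [hsm j, div_eq_div_iff hA.ne' (by positivity)] at this
      field_simp at this ⊢
      linarith
    have hsj : ∀ j : Fin K, s j = Real.log ((∑ i, Real.exp (s i)) / K) := by
      intro j
      rw [← hexp j, Real.log_exp]
    have hmm : m = Real.log ((∑ i, Real.exp (s i)) / K) := by
      rw [hm]
      have hpos : (0:ℝ) < (∑ i, Real.exp (s i)) / K := div_pos hA (by positivity)
      rw [Finset.sum_congr rfl fun j _ => by rw [hsj j], ← Finset.sum_mul]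
      simp only [Real.exp_log hpos, Finset.sum_const, Finset.card_univ, Fintype.card_fin,
        nsmul_eq_mul]
      rw [mul_div_cancel₀ _ (by positivity : (K:ℝ) ≠ 0), mul_comm, ← mul_assoc,
        inv_mul_cancel₀ hA.ne', one_mul]
    rw [hsj k, hmm, sub_self, mul_zero]
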